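/- arXiv:math/0407467 — 3 statements merged into one kernel-verified Lean document; each statement's English description precedes it below -/
import Mathlib

section
/- (Witt's theorem, matrix form) Given two n×m complex matrices T₁ and T₂, there exists an orthogonal matrix g ∈ O_n(ℂ) with g T₁ = T₂ if and only if T₁ᵗ T₁ = T₂ᵗ T₂ and ker T₁ = ker T₂. -/
set_option linter.unusedSectionVars false
set_option linter.unreachableTactic false
set_option maxHeartbeats 1000000
open Matrix

section WittAux

variable {n : ℕ} {ι κ : Type} [Fintype ι] [Fintype κ] [DecidableEq ι] [DecidableEq κ]

/-- If the Gram matrix is invertible then the columns are independent. -/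
lemma gram_inj (M : Matrix (Fin n) ι ℂ) (h : IsUnit (Mᵀ * M).det) :
    Function.Injective M.mulVecLin := by
  rw [← LinearMap.ker_eq_bot]
  rw [LinearMap.ker_eq_bot']
  intro x hx
  have h1 : (Mᵀ * M).mulVec x = 0 := by
    rw [← Matrix.mulVec_mulVec]
    simpa [Matrix.mulVecLin_apply] using congrArg (Mᵀ.mulVec) hx
  have h2 := congrArg ((Mᵀ * M)⁻¹.mulVec) h1
  rwa [Matrix.mulVec_mulVec, Matrix.nonsing_inv_mul _ h, Matrix.one_mulVec,
    Matrix.mulVec_zero] at h2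

lemma inj_card_le (M : Matrix (Fin n) ι ℂ) (h : Function.Injective M.mulVecLin) :
    Fintype.card ι ≤ n := by
  have := LinearMap.finrank_le_finrank_of_injective h
  simpa using this

/-- transpose of an injective matrix is surjective: can solve Mᵀ D = N. -/
lemma solve_transpose (M : Matrix (Fin n) ι ℂ) (h : Function.Injective M.mulVecLin)
    (N : Matrix ι κ ℂ) : ∃ D : Matrix (Fin n) κ ℂ, Mᵀ * D = N := by
  have hsurj : Function.Surjective Mᵀ.mulVecLin := by
    rw [← LinearMap.range_eq_top]
    apply Submodule.eq_top_of_finrank_eq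
    have h1 : Mᵀ.rank = M.rank := Matrix.rank_transpose M
    have h2 : M.rank = Fintype.card ι := by
      rw [Matrix.rank]
      rw [LinearMap.finrank_range_of_inj h]
      simp
    rw [Matrix.rank] at h1
    rw [h1, h2]
    simp
  choose D hD using fun j => hsurj (fun i => N i j)
  refine ⟨Matrix.of (fun i j => D j i), ?_⟩
  ext i j
  have := congrFun (hD j) i
  rw [Matrix.mulVecLin_apply, Matrix.mulVec_transpose] at this
  simpa [Matrix.vecMul, Matrix.mul_apply, dotProduct, mul_comm] using this


lemma exists_unit_perp (A : Matrix (Fin n) ι ℂ) (hG : IsUnit (Aᵀ * A).det)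
    (hlt : Fintype.card ι < n) :
    ∃ e : Fin n → ℂ, Aᵀ.mulVec e = 0 ∧ e ⬝ᵥ e = 1 := by
  classical
  have hinj := gram_inj A hG
  set W := LinearMap.ker Aᵀ.mulVecLin with hWdef
  have hrkA : A.rank = Fintype.card ι := by
    rw [Matrix.rank, LinearMap.finrank_range_of_inj hinj]; simp
  have hrkAT : Aᵀ.rank = Fintype.card ι := by rw [Matrix.rank_transpose, hrkA]
  have hker : Module.finrank ℂ W + Fintype.card ι = n := by
    have h := LinearMap.finrank_range_add_finrank_ker Aᵀ.mulVecLin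
    rw [← Matrix.rank, hrkAT, ← hWdef] at h
    simp only [Module.finrank_pi, Fintype.card_fin] at h
    omega
  -- range A ⊔ W = ⊤
  have hinf : LinearMap.range A.mulVecLin ⊓ W = ⊥ := by
    rw [Submodule.eq_bot_iff]
    rintro v ⟨⟨u, rfl⟩, hv⟩
    have h1 : (Aᵀ * A).mulVec u = 0 := by
      rw [← Matrix.mulVec_mulVec]; exact hv
    have h2 := congrArg ((Aᵀ * A)⁻¹.mulVec) h1
    rw [Matrix.mulVec_mulVec, Matrix.nonsing_inv_mul _ hG, Matrix.one_mulVec,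
      Matrix.mulVec_zero] at h2
    simp [Matrix.mulVecLin_apply, h2]
  have hsup : LinearMap.range A.mulVecLin ⊔ W = ⊤ := by
    apply Submodule.eq_top_of_finrank_eq
    have h3 := Submodule.finrank_sup_add_finrank_inf_eq (LinearMap.range A.mulVecLin) W
    rw [hinf, finrank_bot ℂ (Fin n → ℂ), add_zero] at h3
    rw [h3, ← Matrix.rank, hrkA]
    simp only [Module.finrank_pi, Fintype.card_fin]
    omega
  -- exists non-isotropic vector in W
  have hwex : ∃ w ∈ W, w ⬝ᵥ w ≠ 0 := by
    by_contra hc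
    push_neg at hc
    have hpair : ∀ w ∈ W, ∀ w' ∈ W, w ⬝ᵥ w' = 0 := by
      intro w hw w' hw'
      have h1 := hc (w + w') (W.add_mem hw hw')
      have h2 := hc w hw
      have h3 := hc w' hw'
      rw [add_dotProduct, dotProduct_add, dotProduct_add, h2, h3,
        dotProduct_comm w' w] at h1
      have : (2 : ℂ) * (w ⬝ᵥ w') = 0 := by ring_nf; linear_combination h1
      simpa [two_ne_zero] using this
    -- W nontrivial
    have hWpos : 0 < Module.finrank ℂ W := by omega
    have hWbot : W ≠ ⊥ := by
      intro h
      rw [h, finrank_bot ℂ (Fin n → ℂ)] at hWpos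
      omega
    obtain ⟨w, hwW, hw0'⟩ := Submodule.exists_mem_ne_zero_of_ne_bot hWbot
    have hperp : ∀ v : Fin n → ℂ, w ⬝ᵥ v = 0 := by
      intro v
      have hv : v ∈ LinearMap.range A.mulVecLin ⊔ W := hsup ▸ Submodule.mem_top
      obtain ⟨a, ha, b, hb, rfl⟩ := Submodule.mem_sup.mp hv
      obtain ⟨u, rfl⟩ := ha
      have h1 : w ⬝ᵥ A.mulVecLin u = 0 := by
        rw [Matrix.mulVecLin_apply, Matrix.dotProduct_mulVec, ← Matrix.mulVec_transpose]
        have : Aᵀ.mulVec w = 0 := hwW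
        rw [this, zero_dotProduct]
      rw [dotProduct_add, h1, zero_add]
      exact hpair w hwW b hb
    apply hw0'
    funext i
    have := hperp (Pi.single i 1)
    simpa [dotProduct_single] using this
  obtain ⟨w, hwW, hw⟩ := hwex
  obtain ⟨z, hz⟩ := IsAlgClosed.exists_pow_nat_eq (k := ℂ) (w ⬝ᵥ w) (n := 2) (by norm_num)
  have hz0 : z ≠ 0 := by
    intro h; rw [h] at hz; simp at hz; exact hw hz.symm
  refine ⟨z⁻¹ • w, ?_, ?_⟩
  · rw [Matrix.mulVec_smul]
    have : Aᵀ.mulVec w = 0 := hwW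
    rw [this, smul_zero]
  · rw [smul_dotProduct, dotProduct_smul, smul_eq_mul, smul_eq_mul, ← hz]
    field_simp


lemma mul_submatrix_right {a b c d : Type} [Fintype b] [Fintype c] [DecidableEq c]
    (X : Matrix a b ℂ) (Y : Matrix b c ℂ) (f : d → c) :
    X * Y.submatrix id f = (X * Y).submatrix id f := by
  ext i j; simp [Matrix.mul_apply]

lemma submatrix_mul_submatrix {a b c d e : Type} [Fintype b]
    (X : Matrix a b ℂ) (Y : Matrix b c ℂ) (f : d → a) (g : e → c) :
    X.submatrix f id * Y.submatrix id g = (X * Y).submatrix f g := by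
  ext i j; simp [Matrix.mul_apply, Matrix.submatrix_apply]

lemma ortho_complete {n : ℕ} : ∀ (p : ℕ) (ι : Type) [Fintype ι] [DecidableEq ι]
    (A : Matrix (Fin n) ι ℂ), IsUnit (Aᵀ * A).det → Fintype.card ι + p = n →
    ∃ E : Matrix (Fin n) (Fin p) ℂ, Aᵀ * E = 0 ∧ Eᵀ * E = 1 := by
  intro p
  induction p with
  | zero =>
    intro ι _ _ A hG hcard
    exact ⟨0, Subsingleton.elim _ _, Subsingleton.elim _ _⟩
  | succ p IH =>
    intro ι _ _ A hG hcard
    obtain ⟨e, he1, he2⟩ := exists_unit_perp A hG (by omega)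
    set E₀ : Matrix (Fin n) Unit ℂ := Matrix.of (fun i _ => e i) with hE₀
    have hAE₀ : Aᵀ * E₀ = 0 := by
      ext i j
      simpa [hE₀, Matrix.mul_apply, Matrix.mulVec, dotProduct] using congrFun he1 i
    have hE₀A : E₀ᵀ * A = 0 := by
      have := congrArg Matrix.transpose hAE₀
      rwa [Matrix.transpose_mul, Matrix.transpose_transpose, Matrix.transpose_zero] at this
    have hE₀E₀ : E₀ᵀ * E₀ = 1 := by
      ext i j
      simpa [hE₀, Matrix.mul_apply, dotProduct] using he2
    set A' : Matrix (Fin n) (ι ⊕ Unit) ℂ := Matrix.fromCols A E₀ with hA'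
    have hA'gram : A'ᵀ * A' = Matrix.fromBlocks (Aᵀ * A) 0 0 1 := by
      rw [hA', Matrix.transpose_fromCols, Matrix.fromRows_mul_fromCols,
        hAE₀, hE₀A, hE₀E₀]
    have hG' : IsUnit (A'ᵀ * A').det := by
      rw [hA'gram, Matrix.det_fromBlocks_zero₂₁]
      simpa using hG
    obtain ⟨E', hAE', hE'E'⟩ := IH (ι ⊕ Unit) A' hG' (by simp [Fintype.card_sum]; omega)
    have hAE'' : Aᵀ * E' = 0 ∧ E₀ᵀ * E' = 0 := by
      rw [hA', Matrix.transpose_fromCols, Matrix.fromRows_mul] at hAE'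
      have h0 : (0 : Matrix (ι ⊕ Unit) (Fin p) ℂ) = Matrix.fromRows 0 0 := by
        rw [Matrix.fromRows_zero]
      rw [h0, Matrix.fromRows_ext_iff] at hAE'
      exact hAE'
    set E'' : Matrix (Fin n) (Unit ⊕ Fin p) ℂ := Matrix.fromCols E₀ E' with hE''
    have hgram'' : E''ᵀ * E'' = 1 := by
      rw [hE'', Matrix.transpose_fromCols, Matrix.fromRows_mul_fromCols, hE₀E₀,
        hAE''.2, hE'E']
      have : E'ᵀ * E₀ = 0 := by
        have := congrArg Matrix.transpose hAE''.2
        rwa [Matrix.transpose_mul, Matrix.transpose_transpose, Matrix.transpose_zero] at this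
      rw [this, Matrix.fromBlocks_one]
    have hperp'' : Aᵀ * E'' = 0 := by
      rw [hE'', Matrix.mul_fromCols, hAE₀, hAE''.1, Matrix.fromCols_zero]
    set σ : Fin (p + 1) ≃ (Unit ⊕ Fin p) := Fintype.equivOfCardEq (by simp; omega)
    refine ⟨E''.submatrix id σ, ?_, ?_⟩
    · rw [mul_submatrix_right, hperp'']
      rfl
    · have h1 : (E''.submatrix id σ)ᵀ = E''ᵀ.submatrix σ id := rfl
      rw [h1, submatrix_mul_submatrix, hgram'', Matrix.submatrix_one_equiv]


lemma iso_dual {n : ℕ} {ι₁ ι₂ : Type} [Fintype ι₁] [Fintype ι₂] [DecidableEq ι₁]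
    [DecidableEq ι₂] (A₁ : Matrix (Fin n) ι₁ ℂ) (A₂ : Matrix (Fin n) ι₂ ℂ)
    (hinj : Function.Injective (Matrix.fromCols A₁ A₂).mulVecLin)
    (h12 : A₁ᵀ * A₂ = 0) (h22 : A₂ᵀ * A₂ = 0) :
    ∃ D : Matrix (Fin n) ι₂ ℂ, A₁ᵀ * D = 0 ∧ A₂ᵀ * D = 1 ∧ Dᵀ * D = 0 := by
  obtain ⟨D', hD'⟩ := solve_transpose (Matrix.fromCols A₁ A₂) hinj
    (Matrix.fromRows 0 (1 : Matrix ι₂ ι₂ ℂ))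
  rw [Matrix.transpose_fromCols, Matrix.fromRows_mul, Matrix.fromRows_ext_iff] at hD'
  obtain ⟨h1D', h2D'⟩ := hD'
  set S : Matrix ι₂ ι₂ ℂ := D'ᵀ * D' with hS
  have hSsymm : Sᵀ = S := by rw [hS, Matrix.transpose_mul, Matrix.transpose_transpose]
  have hD'A2 : D'ᵀ * A₂ = 1 := by
    have := congrArg Matrix.transpose h2D'
    rwa [Matrix.transpose_mul, Matrix.transpose_transpose, Matrix.transpose_one] at this
  refine ⟨D' - (2 : ℂ)⁻¹ • (A₂ * S), ?_, ?_, ?_⟩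
  · rw [Matrix.mul_sub, h1D', Matrix.mul_smul, ← Matrix.mul_assoc, h12, Matrix.zero_mul,
      smul_zero, sub_zero]
  · rw [Matrix.mul_sub, h2D', Matrix.mul_smul, ← Matrix.mul_assoc, h22, Matrix.zero_mul,
      smul_zero, sub_zero]
  · rw [Matrix.transpose_sub, Matrix.transpose_smul, Matrix.transpose_mul, hSsymm,
      Matrix.sub_mul, Matrix.mul_sub, Matrix.mul_sub, ← hS, Matrix.smul_mul,
      Matrix.mul_smul, ← Matrix.mul_assoc, hD'A2, Matrix.one_mul,
      Matrix.smul_mul, Matrix.mul_smul]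
    rw [Matrix.mul_assoc S A₂ᵀ D', h2D', Matrix.mul_one,
      Matrix.mul_assoc S A₂ᵀ (A₂ * S), ← Matrix.mul_assoc A₂ᵀ A₂ S, h22,
      Matrix.zero_mul, Matrix.mul_zero, smul_zero, smul_zero, sub_zero]
    module

lemma frame_trans {n : ℕ} {ι : Type} [Fintype ι] [DecidableEq ι]
    (hcard : Fintype.card ι = n) (M₁ M₂ : Matrix (Fin n) ι ℂ) (Γ : Matrix ι ι ℂ)
    (h1 : M₁ᵀ * M₁ = Γ) (h2 : M₂ᵀ * M₂ = Γ) (hΓ : IsUnit Γ.det) :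
    ∃ g : Matrix (Fin n) (Fin n) ℂ, gᵀ * g = 1 ∧ g * M₁ = M₂ := by
  set e : ι ≃ Fin n := Fintype.equivFinOfCardEq hcard
  set N₁ := M₁.submatrix id e.symm with hN₁
  set N₂ := M₂.submatrix id e.symm with hN₂
  set Γ' := Γ.submatrix e.symm e.symm with hΓ'
  have hg1 : N₁ᵀ * N₁ = Γ' := by
    rw [hN₁, Matrix.transpose_submatrix, submatrix_mul_submatrix, h1, hΓ']
  have hg2 : N₂ᵀ * N₂ = Γ' := by
    rw [hN₂, Matrix.transpose_submatrix, submatrix_mul_submatrix, h2, hΓ']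
  have hΓ'det : IsUnit Γ'.det := by
    rwa [hΓ', Matrix.det_submatrix_equiv_self]
  have hN₁det : IsUnit N₁.det := by
    have : IsUnit (N₁.det * N₁.det) := by
      have := congrArg Matrix.det hg1
      rw [Matrix.det_mul, Matrix.det_transpose] at this
      rwa [this]
    exact isUnit_of_mul_isUnit_left this
  have hN₂det : IsUnit N₂.det := by
    have : IsUnit (N₂.det * N₂.det) := by
      have := congrArg Matrix.det hg2
      rw [Matrix.det_mul, Matrix.det_transpose] at this
      rwa [this]
    exact isUnit_of_mul_isUnit_left this
  refine ⟨N₂ * N₁⁻¹, ?_, ?_⟩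
  · rw [Matrix.transpose_mul, Matrix.mul_assoc, ← Matrix.mul_assoc N₂ᵀ N₂ N₁⁻¹, hg2, ← hg1,
      Matrix.mul_assoc N₁ᵀ N₁ N₁⁻¹, Matrix.mul_nonsing_inv _ hN₁det, Matrix.mul_one,
      Matrix.transpose_nonsing_inv]
    exact Matrix.nonsing_inv_mul _ (by rwa [Matrix.det_transpose])
  · have hfix : M₁ = N₁.submatrix id e := by ext i j; simp [hN₁]
    have h5 : N₂ * N₁⁻¹ * N₁ = N₂ := by
      rw [Matrix.mul_assoc, Matrix.nonsing_inv_mul _ hN₁det, Matrix.mul_one]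
    rw [hfix, mul_submatrix_right, h5, hN₂]
    ext i j; simp


/-- the canonical completed Gram matrix -/
noncomputable def Gamma1 (ι₁ ι₂ : Type) [Fintype ι₁] [Fintype ι₂] [DecidableEq ι₁]
    [DecidableEq ι₂] : Matrix ((ι₁ ⊕ ι₂) ⊕ ι₂) ((ι₁ ⊕ ι₂) ⊕ ι₂) ℂ :=
  Matrix.fromBlocks (Matrix.fromBlocks 1 0 0 0) (Matrix.fromRows 0 1)
    (Matrix.fromCols 0 1) 0

lemma Gamma1_sq {ι₁ ι₂ : Type} [Fintype ι₁] [Fintype ι₂] [DecidableEq ι₁] [DecidableEq ι₂] :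
    Gamma1 ι₁ ι₂ * Gamma1 ι₁ ι₂ = 1 := by
  ext i j
  rcases i with (a | b) | c <;> rcases j with (d | e) | f <;>
    simp [Gamma1, Matrix.mul_apply, Matrix.one_apply, Fintype.sum_sum_type,
      Finset.sum_ite_eq, Finset.sum_ite_eq']

noncomputable def GammaF (n : ℕ) (ι₁ ι₂ : Type) [Fintype ι₁] [Fintype ι₂] [DecidableEq ι₁]
    [DecidableEq ι₂] :
    Matrix (((ι₁ ⊕ ι₂) ⊕ ι₂) ⊕ Fin (n - Fintype.card ((ι₁ ⊕ ι₂) ⊕ ι₂)))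
      (((ι₁ ⊕ ι₂) ⊕ ι₂) ⊕ Fin (n - Fintype.card ((ι₁ ⊕ ι₂) ⊕ ι₂))) ℂ :=
  Matrix.fromBlocks (Gamma1 ι₁ ι₂) 0 0 1

lemma GammaF_sq {n : ℕ} {ι₁ ι₂ : Type} [Fintype ι₁] [Fintype ι₂] [DecidableEq ι₁]
    [DecidableEq ι₂] : GammaF n ι₁ ι₂ * GammaF n ι₁ ι₂ = 1 := by
  rw [GammaF, Matrix.fromBlocks_multiply]
  simp [Gamma1_sq, Matrix.fromBlocks_one]

lemma GammaF_unit {n : ℕ} {ι₁ ι₂ : Type} [Fintype ι₁] [Fintype ι₂] [DecidableEq ι₁]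
    [DecidableEq ι₂] : IsUnit (GammaF n ι₁ ι₂).det :=
  Matrix.isUnit_det_of_left_inverse GammaF_sq

/-- Completion of an injective frame with Gram `diag(1,0)` to a full "basis" with Gram `GammaF`. -/
lemma complete_frame {n : ℕ} {ι₁ ι₂ : Type} [Fintype ι₁] [Fintype ι₂] [DecidableEq ι₁]
    [DecidableEq ι₂] (A : Matrix (Fin n) (ι₁ ⊕ ι₂) ℂ)
    (hgram : Aᵀ * A = Matrix.fromBlocks 1 0 0 0)
    (hinj : Function.Injective A.mulVecLin) :
    ∃ M : Matrix (Fin n) (((ι₁ ⊕ ι₂) ⊕ ι₂) ⊕ Fin (n - Fintype.card ((ι₁ ⊕ ι₂) ⊕ ι₂))) ℂ,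
      Mᵀ * M = GammaF n ι₁ ι₂ ∧ M.submatrix id (Sum.inl ∘ Sum.inl) = A := by
  classical
  set A₁ : Matrix (Fin n) ι₁ ℂ := Matrix.of (fun i a => A i (Sum.inl a)) with hA₁
  set A₂ : Matrix (Fin n) ι₂ ℂ := Matrix.of (fun i a => A i (Sum.inr a)) with hA₂
  have hAeq : A = Matrix.fromCols A₁ A₂ := by
    ext i (a | b) <;> rfl
  have hgram' : Matrix.fromBlocks (A₁ᵀ * A₁) (A₁ᵀ * A₂) (A₂ᵀ * A₁) (A₂ᵀ * A₂) =
      Matrix.fromBlocks 1 0 0 0 := by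
    rw [← hgram, hAeq, Matrix.transpose_fromCols, Matrix.fromRows_mul_fromCols]
  have h11 : A₁ᵀ * A₁ = 1 := by
    have := congrArg Matrix.toBlocks₁₁ hgram'
    simpa [Matrix.toBlocks_fromBlocks₁₁] using this
  have h12 : A₁ᵀ * A₂ = 0 := by
    have := congrArg Matrix.toBlocks₁₂ hgram'
    simpa [Matrix.toBlocks_fromBlocks₁₂] using this
  have h21 : A₂ᵀ * A₁ = 0 := by
    have := congrArg Matrix.toBlocks₂₁ hgram'
    simpa [Matrix.toBlocks_fromBlocks₂₁] using this
  have h22 : A₂ᵀ * A₂ = 0 := by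
    have := congrArg Matrix.toBlocks₂₂ hgram'
    simpa [Matrix.toBlocks_fromBlocks₂₂] using this
  obtain ⟨D, hD1, hD2, hD3⟩ := iso_dual A₁ A₂ (hAeq ▸ hinj) h12 h22
  set A' : Matrix (Fin n) ((ι₁ ⊕ ι₂) ⊕ ι₂) ℂ := Matrix.fromCols A D with hA'
  have hDA1 : Dᵀ * A₁ = 0 := by
    have := congrArg Matrix.transpose hD1
    rwa [Matrix.transpose_mul, Matrix.transpose_transpose, Matrix.transpose_zero] at this
  have hDA2 : Dᵀ * A₂ = 1 := by
    have := congrArg Matrix.transpose hD2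
    rwa [Matrix.transpose_mul, Matrix.transpose_transpose, Matrix.transpose_one] at this
  have hAD : Aᵀ * D = Matrix.fromRows 0 1 := by
    rw [hAeq, Matrix.transpose_fromCols, Matrix.fromRows_mul, hD1, hD2]
  have hDA : Dᵀ * A = Matrix.fromCols 0 1 := by
    rw [hAeq, Matrix.mul_fromCols, hDA1, hDA2]
  have hgramA' : A'ᵀ * A' = Gamma1 ι₁ ι₂ := by
    rw [hA', Matrix.transpose_fromCols, Matrix.fromRows_mul_fromCols, Gamma1, hgram,
      hAD, hDA, hD3]
  have hunitA' : IsUnit (A'ᵀ * A').det := by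
    rw [hgramA']
    exact Matrix.isUnit_det_of_left_inverse Gamma1_sq
  have hcard : Fintype.card ((ι₁ ⊕ ι₂) ⊕ ι₂) ≤ n := inj_card_le A' (gram_inj A' hunitA')
  obtain ⟨E, hE1, hE2⟩ := ortho_complete (n - Fintype.card ((ι₁ ⊕ ι₂) ⊕ ι₂))
    ((ι₁ ⊕ ι₂) ⊕ ι₂) A' hunitA' (by omega)
  refine ⟨Matrix.fromCols A' E, ?_, ?_⟩
  · have hEA : Eᵀ * A' = 0 := by
      have := congrArg Matrix.transpose hE1
      rwa [Matrix.transpose_mul, Matrix.transpose_transpose, Matrix.transpose_zero] at this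
    rw [Matrix.transpose_fromCols, Matrix.fromRows_mul_fromCols, hgramA', hE1, hE2,
      hEA, GammaF]
  · ext i a
    simp [Matrix.fromCols, hA', hAeq, Matrix.submatrix_apply]


end WittAux

/-- **Witt's theorem, matrix form.**  Given two `n × m` complex matrices `T₁`, `T₂`,
there is `g ∈ O_n(ℂ)` (i.e. `gᵀ g = 1`) with `g T₁ = T₂` if and only if
`T₁ᵗ T₁ = T₂ᵗ T₂` and `ker T₁ = ker T₂`. -/
theorem stmt_2 (n m : ℕ) (T₁ T₂ : Matrix (Fin n) (Fin m) ℂ) :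
    (∃ g : Matrix (Fin n) (Fin n) ℂ, gᵀ * g = 1 ∧ g * T₁ = T₂) ↔
      (T₁ᵀ * T₁ = T₂ᵀ * T₂ ∧
        LinearMap.ker T₁.mulVecLin = LinearMap.ker T₂.mulVecLin) := by
  constructor
  · rintro ⟨g, hg1, hg2⟩
    have hginj : Function.Injective g.mulVecLin :=
      gram_inj g (by rw [hg1]; simp)
    constructor
    · rw [← hg2, Matrix.transpose_mul, Matrix.mul_assoc, ← Matrix.mul_assoc gᵀ g T₁, hg1,
        Matrix.one_mul]
    · rw [← hg2, Matrix.mulVecLin_mul, LinearMap.ker_comp,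
        LinearMap.ker_eq_bot.mpr hginj, Submodule.comap_bot]
  · rintro ⟨hg, hk⟩
    classical
    set K := LinearMap.ker T₁.mulVecLin with hK
    obtain ⟨C, hC⟩ := Submodule.exists_isCompl K
    haveI : Invertible (2 : ℂ) := invertibleOfNonzero two_ne_zero
    -- the bilinear form on C
    set Φ : LinearMap.BilinForm ℂ C := LinearMap.mk₂ ℂ
      (fun x y : C => T₁.mulVec x.1 ⬝ᵥ T₁.mulVec y.1)
      (by intro x y z; simp [Submodule.coe_add, Matrix.mulVec_add, add_dotProduct])
      (by intro c x y; simp [Matrix.mulVec_smul, smul_dotProduct])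
      (by intro x y z; simp [Submodule.coe_add, Matrix.mulVec_add, dotProduct_add])
      (by intro c x y; simp [Matrix.mulVec_smul, dotProduct_smul]) with hΦ
    have hΦsymm : Φ.IsSymm := by
      rw [LinearMap.BilinForm.isSymm_def]
      intro x y
      simp [hΦ, dotProduct_comm]
    obtain ⟨v, hv⟩ := LinearMap.BilinForm.exists_orthogonal_basis (LinearMap.BilinForm.isSymm_iff.mp hΦsymm)
    set d : Fin (Module.finrank ℂ C) → ℂ := fun i => Φ (v i) (v i) with hd
    -- square roots
    have hsq : ∀ i, ∃ z : ℂ, z ^ 2 = d i := fun i =>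
      IsAlgClosed.exists_pow_nat_eq (d i) (by norm_num)
    choose z hz using hsq
    set c : Fin (Module.finrank ℂ C) → ℂˣ := fun i =>
      if h : d i = 0 then 1 else
        (Units.mk0 (z i) (fun h0 => h (by rw [← hz i, h0]; ring)))⁻¹ with hc
    set u : Module.Basis (Fin (Module.finrank ℂ C)) ℂ C := v.unitsSMul c with hu
    have hud : ∀ i j, Φ (u i) (u j) =
        if i = j then (if d i = 0 then 0 else 1) else 0 := by
      intro i j
      rw [hu, Module.Basis.unitsSMul_apply, Module.Basis.unitsSMul_apply, Units.smul_def, Units.smul_def,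
        LinearMap.map_smul₂, _root_.map_smul (Φ _), smul_eq_mul, smul_eq_mul]
      by_cases hij : i = j
      · subst hij
        rw [if_pos rfl]
        by_cases h0 : d i = 0
        · rw [if_pos h0]
          have h1 : Φ (v i) (v i) = 0 := h0
          rw [h1, mul_zero, mul_zero]
        · rw [if_neg h0]
          have hzi : z i ≠ 0 := fun h0' => h0 (by rw [← hz i, h0']; ring)
          have h1 : Φ (v i) (v i) = d i := rfl
          rw [h1, hc]
          simp only [dif_neg h0, Units.val_inv_eq_inv_val, Units.val_mk0]
          rw [← hz i]
          field_simp
      · rw [if_neg hij]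
        have h1 : Φ (v i) (v j) = 0 := hv hij
        rw [h1, mul_zero, mul_zero]
    haveI : DecidablePred (fun i => d i ≠ 0) := Classical.decPred _
    set σ : {i // d i ≠ 0} ⊕ {i // ¬ d i ≠ 0} ≃ Fin (Module.finrank ℂ C) :=
      Equiv.sumCompl _ with hσ
    set w : Module.Basis ({i // d i ≠ 0} ⊕ {i // ¬ d i ≠ 0}) ℂ C := u.reindex σ.symm with hwdef
    have hw : ∀ a, w a = u (σ a) := by
      intro a; rw [hwdef, Module.Basis.reindex_apply]; simp
    have hWgram : ∀ a b, Φ (w a) (w b) =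
        (Matrix.fromBlocks (1 : Matrix {i // d i ≠ 0} {i // d i ≠ 0} ℂ) 0 0 0) a b := by
      intro a b
      rw [hw, hw, hud]
      rcases a with a | a <;> rcases b with b | b
      · simp only [hσ, Equiv.sumCompl_apply_inl, Matrix.fromBlocks_apply₁₁, Matrix.one_apply]
        by_cases hab : a = b
        · subst hab; simp [if_neg a.2]
        · rw [if_neg (fun h => hab (Subtype.ext h)), if_neg hab]
      · simp only [hσ, Equiv.sumCompl_apply_inl, Equiv.sumCompl_apply_inr,
          Matrix.fromBlocks_apply₁₂, Matrix.zero_apply]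
        rw [if_neg]
        intro h
        exact b.2 (h ▸ a.2)
      · simp only [hσ, Equiv.sumCompl_apply_inl, Equiv.sumCompl_apply_inr,
          Matrix.fromBlocks_apply₂₁, Matrix.zero_apply]
        rw [if_neg]
        intro h
        exact a.2 (h ▸ b.2)
      · simp only [hσ, Equiv.sumCompl_apply_inr, Matrix.fromBlocks_apply₂₂, Matrix.zero_apply]
        by_cases hab : (a : Fin (Module.finrank ℂ C)) = (b : Fin (Module.finrank ℂ C))
        · rw [if_pos hab, if_pos (not_not.mp a.2)]
        · rw [if_neg hab]
    -- dot products through T₂ agree with those through T₁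
    have key : ∀ x y : Fin m → ℂ, T₂ *ᵥ x ⬝ᵥ T₂ *ᵥ y = T₁ *ᵥ x ⬝ᵥ T₁ *ᵥ y := by
      intro x y
      have h1 : ∀ (T : Matrix (Fin n) (Fin m) ℂ), T *ᵥ x ⬝ᵥ T *ᵥ y = x ⬝ᵥ (Tᵀ * T) *ᵥ y := by
        intro T
        rw [← Matrix.mulVec_mulVec, Matrix.dotProduct_mulVec x, Matrix.vecMul_transpose]
      rw [h1, h1, hg]
    -- the two frames
    set A : Matrix (Fin n) ({i // d i ≠ 0} ⊕ {i // ¬ d i ≠ 0}) ℂ :=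
      Matrix.of (fun i a => (T₁ *ᵥ ((w a : C) : Fin m → ℂ)) i) with hA
    set B : Matrix (Fin n) ({i // d i ≠ 0} ⊕ {i // ¬ d i ≠ 0}) ℂ :=
      Matrix.of (fun i a => (T₂ *ᵥ ((w a : C) : Fin m → ℂ)) i) with hB
    have hgramA : Aᵀ * A = Matrix.fromBlocks 1 0 0 0 := by
      ext a b
      rw [Matrix.mul_apply, ← hWgram a b]
      simp [hA, hΦ, dotProduct, Matrix.transpose_apply]
    have hgramB : Bᵀ * B = Matrix.fromBlocks 1 0 0 0 := by
      ext a b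
      rw [Matrix.mul_apply, ← hWgram a b]
      have := key ((w a : C) : Fin m → ℂ) ((w b : C) : Fin m → ℂ)
      simp only [hB, hΦ, LinearMap.mk₂_apply]
      rw [← this]
      simp [dotProduct, Matrix.transpose_apply]
    -- expressing mulVec of the frames
    have hTsum : ∀ (T : Matrix (Fin n) (Fin m) ℂ) (f : {i // d i ≠ 0} ⊕ {i // ¬ d i ≠ 0} → ℂ),
        T *ᵥ (∑ a, f a • ((w a : C) : Fin m → ℂ)) = ∑ a, f a • (T *ᵥ ((w a : C) : Fin m → ℂ)) := by
      intro T f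
      rw [show (T *ᵥ ∑ a, f a • ((w a : C) : Fin m → ℂ))
          = T.mulVecLin (∑ a, f a • ((w a : C) : Fin m → ℂ)) from rfl, map_sum]
      congr 1
      funext a
      rw [_root_.map_smul]
      rfl
    have hcoe : ∀ (f : {i // d i ≠ 0} ⊕ {i // ¬ d i ≠ 0} → ℂ),
        ((∑ a, f a • w a : C) : Fin m → ℂ) = ∑ a, f a • ((w a : C) : Fin m → ℂ) := by
      intro f
      push_cast
      rfl
    have hmv : ∀ (T : Matrix (Fin n) (Fin m) ℂ) (x : {i // d i ≠ 0} ⊕ {i // ¬ d i ≠ 0} → ℂ),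
        (Matrix.of (fun i a => (T *ᵥ ((w a : C) : Fin m → ℂ)) i)) *ᵥ x
          = T *ᵥ (((∑ a, x a • w a : C) : Fin m → ℂ)) := by
      intro T x
      rw [hcoe, hTsum]
      funext i
      simp only [Matrix.mulVec, dotProduct, Finset.sum_apply, Pi.smul_apply, smul_eq_mul,
        Matrix.of_apply]
      exact Finset.sum_congr rfl (fun a _ => by ring)
    have hinjA : Function.Injective A.mulVecLin := by
      rw [← LinearMap.ker_eq_bot, LinearMap.ker_eq_bot']
      intro x hx
      rw [Matrix.mulVecLin_apply, hA, hmv T₁ x] at hx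
      set y : C := ∑ a, x a • w a with hy
      have hyK : (y : Fin m → ℂ) ∈ K := by
        rw [hK]; exact hx
      have hyC : (y : Fin m → ℂ) ∈ C := y.2
      have : (y : Fin m → ℂ) ∈ K ⊓ C := ⟨hyK, hyC⟩
      rw [hC.inf_eq_bot, Submodule.mem_bot] at this
      have hy0 : y = 0 := ZeroMemClass.coe_eq_zero.mp this
      have := Fintype.linearIndependent_iff.mp w.linearIndependent x (by rw [← hy, hy0])
      funext a
      exact this a
    have hinjB : Function.Injective B.mulVecLin := by
      rw [← LinearMap.ker_eq_bot, LinearMap.ker_eq_bot']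
      intro x hx
      rw [Matrix.mulVecLin_apply, hB, hmv T₂ x] at hx
      set y : C := ∑ a, x a • w a with hy
      have hyK : (y : Fin m → ℂ) ∈ K := by
        rw [hk]; exact hx
      have hyC : (y : Fin m → ℂ) ∈ C := y.2
      have : (y : Fin m → ℂ) ∈ K ⊓ C := ⟨hyK, hyC⟩
      rw [hC.inf_eq_bot, Submodule.mem_bot] at this
      have hy0 : y = 0 := ZeroMemClass.coe_eq_zero.mp this
      have := Fintype.linearIndependent_iff.mp w.linearIndependent x (by rw [← hy, hy0])
      funext a
      exact this a
    obtain ⟨MA, hMA1, hMA2⟩ := complete_frame A hgramA hinjA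
    obtain ⟨MB, hMB1, hMB2⟩ := complete_frame B hgramB hinjB
    have hcards : Fintype.card ((({i // d i ≠ 0} ⊕ {i // ¬ d i ≠ 0}) ⊕ {i // ¬ d i ≠ 0}) ⊕
        Fin (n - Fintype.card (({i // d i ≠ 0} ⊕ {i // ¬ d i ≠ 0}) ⊕ {i // ¬ d i ≠ 0}))) = n := by
      have h1 : IsUnit (MAᵀ * MA).det := by rw [hMA1]; exact GammaF_unit
      have h2 := inj_card_le MA (gram_inj MA h1)
      simp only [Fintype.card_sum, Fintype.card_fin] at h2 ⊢
      omega
    obtain ⟨g, hg1, hg2⟩ := frame_trans hcards MA MB _ hMA1 hMB1 GammaF_unit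
    refine ⟨g, hg1, ?_⟩
    -- g * A = B
    have hgAB : g * A = B := by
      rw [← hMA2, ← hMB2, mul_submatrix_right, hg2]
    have hcol : ∀ a, g *ᵥ (T₁ *ᵥ ((w a : C) : Fin m → ℂ)) = T₂ *ᵥ ((w a : C) : Fin m → ℂ) := by
      intro a
      funext i
      have := congrFun (congrFun hgAB i) a
      rw [Matrix.mul_apply] at this
      simpa [hA, hB, Matrix.mulVec, dotProduct] using this
    -- conclude on all vectors
    have hvec : ∀ x : Fin m → ℂ, (g * T₁) *ᵥ x = T₂ *ᵥ x := by
      intro x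
      have hx : x ∈ K ⊔ C := by rw [hC.sup_eq_top]; trivial
      obtain ⟨kx, hkx, cx, hcx, rfl⟩ := Submodule.mem_sup.mp hx
      rw [Matrix.mulVec_add, Matrix.mulVec_add]
      have hkx1 : T₁ *ᵥ kx = 0 := hkx
      have hkx2 : T₂ *ᵥ kx = 0 := by
        have : kx ∈ LinearMap.ker T₂.mulVecLin := by rw [← hk]; exact hkx
        exact this
      have hKpart : (g * T₁) *ᵥ kx = T₂ *ᵥ kx := by
        rw [← Matrix.mulVec_mulVec, hkx1, hkx2, Matrix.mulVec_zero]
      rw [hKpart]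
      congr 1
      -- C part
      set yc : C := ⟨cx, hcx⟩ with hyc
      have hrepr : yc = ∑ a, w.repr yc a • w a := (w.sum_repr yc).symm
      have hcxe : cx = ((∑ a, w.repr yc a • w a : C) : Fin m → ℂ) := by
        rw [← hrepr]
      rw [hcxe, hcoe]
      rw [hTsum, hTsum]
      congr 1
      funext a
      rw [← Matrix.mulVec_mulVec, hcol a]
    ext i j
    have := congrFun (hvec (Pi.single j 1)) i
    rwa [Matrix.mulVec_single_one, Matrix.mulVec_single_one] at this
end

section
/- Assume n ≥ 2m. For every symmetric m×m complex matrix Y of rank k, there exists an n×m matrix X of rank m with XᵗX = Y; in particular, the map Q(T) = TᵗT from M_{n,m}(ℂ) to Sym_m(ℂ) is surjective. -/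
open Matrix

/-- Assume `n ≥ 2m`.  Every symmetric `m × m` complex matrix `Y` admits a
full-rank `n × m` matrix `X` with `Xᵗ X = Y`; in particular `Q(T) = Tᵗ T` is a
surjective map from `M_{n,m}(ℂ)` onto the symmetric matrices. -/
theorem stmt_3 (n m : ℕ) (hnm : n ≥ 2 * m)
    (Y : Matrix (Fin m) (Fin m) ℂ) (hY : Yᵀ = Y) :
    ∃ X : Matrix (Fin n) (Fin m) ℂ, X.rank = m ∧ Xᵀ * X = Y := by
  set A : Matrix (Fin m) (Fin m) ℂ := (2⁻¹ : ℂ) • (Y + 1) with hA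
  set B : Matrix (Fin m) (Fin m) ℂ := (Complex.I * 2⁻¹) • (Y - 1) with hB
  have hAT : Aᵀ = A := by simp [hA, transpose_smul, transpose_add, hY]
  have hBT : Bᵀ = B := by simp [hB, transpose_smul, transpose_sub, hY]
  have key : Aᵀ * A + Bᵀ * B = Y := by
    rw [hAT, hBT, hA, hB]
    rw [Matrix.smul_mul, Matrix.mul_smul, Matrix.smul_mul, Matrix.mul_smul,
      smul_smul, smul_smul]
    have h1 : (Y + 1) * (Y + 1) = Y * Y + Y + Y + 1 := by noncomm_ring
    have h2 : (Y - 1) * (Y - 1) = Y * Y - Y - Y + 1 := by noncomm_ring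
    rw [h1, h2]
    have hI : Complex.I * 2⁻¹ * (Complex.I * 2⁻¹) = -(2⁻¹ * 2⁻¹) := by
      have := Complex.I_mul_I; ring_nf; rw [Complex.I_sq]; ring
    rw [hI]
    have h4 : (2⁻¹ : ℂ) * 2⁻¹ = 4⁻¹ := by norm_num
    rw [h4]
    module
  -- build the big matrix
  have hn : n = (m + m) + (n - 2 * m) := by omega
  let e : Fin n ≃ (Fin m ⊕ Fin m) ⊕ Fin (n - 2 * m) :=
    (finCongr hn).trans ((finSumFinEquiv (m := m + m)).symm.trans
      (Equiv.sumCongr finSumFinEquiv.symm (Equiv.refl _)))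
  let M : Matrix ((Fin m ⊕ Fin m) ⊕ Fin (n - 2 * m)) (Fin m) ℂ :=
    fromRows (fromRows A B) 0
  refine ⟨M.submatrix e id, ?_, ?_⟩
  · -- rank
    have hinj : Function.Injective (M.submatrix e id).mulVecLin := by
      rw [← LinearMap.ker_eq_bot, LinearMap.ker_eq_bot']
      intro v hv
      have hv' : ∀ i, (M *ᵥ v) (e i) = 0 := by
        intro i
        have := congrFun hv i
        simpa [Matrix.mulVecLin_apply, Matrix.mulVec, dotProduct] using this
      have hAv : A *ᵥ v = 0 := by
        funext i
        have := hv' (e.symm (Sum.inl (Sum.inl i)))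
        simpa [M, fromRows_mulVec] using this
      have hBv : B *ᵥ v = 0 := by
        funext i
        have := hv' (e.symm (Sum.inl (Sum.inr i)))
        simpa [M, fromRows_mulVec] using this
      have h1 : (Y + 1) *ᵥ v = 0 := by
        have : ((2⁻¹ : ℂ) • (Y + 1)) *ᵥ v = 0 := hAv
        rw [Matrix.smul_mulVec] at this
        simpa using smul_right_injective _ (by norm_num : (2⁻¹ : ℂ) ≠ 0) (this.trans (smul_zero _).symm)
      have h2 : (Y - 1) *ᵥ v = 0 := by
        have : ((Complex.I * 2⁻¹ : ℂ) • (Y - 1)) *ᵥ v = 0 := hBv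
        rw [Matrix.smul_mulVec] at this
        have hne : (Complex.I * 2⁻¹ : ℂ) ≠ 0 := by
          simp [Complex.I_ne_zero]
        simpa using smul_right_injective _ hne (this.trans (smul_zero _).symm)
      have : ((Y + 1) - (Y - 1)) *ᵥ v = 0 := by
        rw [Matrix.sub_mulVec, h1, h2, sub_zero]
      have h21 : (Y + 1) - (Y - 1) = (2 : ℂ) • (1 : Matrix (Fin m) (Fin m) ℂ) := by
        ext i j; by_cases h : i = j <;> simp [Matrix.one_apply, h] <;> ring
      rw [h21, Matrix.smul_mulVec, Matrix.one_mulVec] at this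
      have := smul_right_injective _ (by norm_num : (2 : ℂ) ≠ 0) (this.trans (smul_zero _).symm)
      simpa using this
    rw [Matrix.rank, LinearMap.finrank_range_of_inj hinj]
    simp
  · rw [Matrix.transpose_submatrix, Matrix.submatrix_mul_equiv, Matrix.submatrix_id_id]
    have : Mᵀ * M = Aᵀ * A + Bᵀ * B := by
      simp [M, Matrix.transpose_fromRows, Matrix.fromCols_mul_fromRows]
    rw [this, key]
end

section
/- Assume n ≥ 2m. The algebra of O_n(ℂ)-invariant polynomial functions on M_{n,m}(ℂ) is the polynomial algebra freely generated by the m(m+1)/2 quadratic invariants r_{ij}, 1 ≤ i ≤ j ≤ m; equivalently the ℂ-algebra homomorphism from the polynomial ring in m(m+1)/2 indeterminates sending the generators to the r_{ij} is an isomorphism onto ℂ[M_{n,m}]^{O_n}. -/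
open MvPolynomial Matrix Module

/-- The quadratic invariant `r_{ij}(X) = Σ_s x_{si} x_{sj}`. -/
noncomputable def rInv (n m : ℕ) (i j : Fin m) : MvPolynomial (Fin n × Fin m) ℂ :=
  ∑ s : Fin n, X (s, i) * X (s, j)

/-- A polynomial function on `M_{n,m}(ℂ)` is `O_n`-invariant if it takes the same value
at `g • X` and `X` for every `g` with `gᵀ g = 1` (acting by left multiplication). -/
def IsOnInvariant (n m : ℕ) (f : MvPolynomial (Fin n × Fin m) ℂ) : Prop :=
  ∀ g : Matrix (Fin n) (Fin n) ℂ, gᵀ * g = 1 →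
    ∀ X : Matrix (Fin n) (Fin m) ℂ,
      eval (fun p : Fin n × Fin m => (g * X) p.1 p.2) f =
        eval (fun p : Fin n × Fin m => X p.1 p.2) f

section SigmaSection

variable {A : Type*} [CommRing A] [Algebra ℂ A]

noncomputable def halfN {m : ℕ} (S : Matrix (Fin m) (Fin m) A) : Matrix (Fin m) (Fin m) A :=
  Matrix.of fun i j =>
    if i < j then algebraMap ℂ A 2⁻¹ * S i j
    else if i = j then algebraMap ℂ A 4⁻¹ * S i i else 0

def sigmaEquiv (n m : ℕ) (h : 2 * m ≤ n) :
    (Fin m ⊕ (Fin m ⊕ Fin (n - 2 * m))) ≃ Fin n :=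
  (Equiv.sumCongr (Equiv.refl (Fin m)) finSumFinEquiv).trans
    (finSumFinEquiv.trans (finCongr (by omega)))

noncomputable def sigmaMat (n m : ℕ) (h : 2 * m ≤ n) (S : Matrix (Fin m) (Fin m) A) :
    Matrix (Fin n) (Fin m) A :=
  (Matrix.fromRows (1 + halfN S)
      (Matrix.fromRows ((algebraMap ℂ A Complex.I) • (1 - halfN S)) 0)).submatrix
    (sigmaEquiv n m h).symm id

theorem halfN_sym {m : ℕ} (S : Matrix (Fin m) (Fin m) A) (hS : Sᵀ = S) :
    halfN S + (halfN S)ᵀ + (halfN S + (halfN S)ᵀ) = S := by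
  have e2 : algebraMap ℂ A 2⁻¹ + algebraMap ℂ A 2⁻¹ = 1 := by
    rw [← map_add, show ((2⁻¹ : ℂ) + 2⁻¹) = 1 by norm_num, RingHom.map_one]
  have e4 : algebraMap ℂ A 4⁻¹ + algebraMap ℂ A 4⁻¹ + (algebraMap ℂ A 4⁻¹ + algebraMap ℂ A 4⁻¹)
      = 1 := by
    simp only [← map_add]
    rw [show ((4⁻¹ : ℂ) + 4⁻¹ + (4⁻¹ + 4⁻¹)) = 1 by norm_num, RingHom.map_one]
  have key2 : ∀ x : A, algebraMap ℂ A 2⁻¹ * x + algebraMap ℂ A 2⁻¹ * x = x := by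
    intro x; linear_combination x * e2
  have key4 : ∀ x : A, algebraMap ℂ A 4⁻¹ * x + algebraMap ℂ A 4⁻¹ * x +
      (algebraMap ℂ A 4⁻¹ * x + algebraMap ℂ A 4⁻¹ * x) = x := by
    intro x; linear_combination x * e4
  ext i j
  have hsym : S j i = S i j := by conv_lhs => rw [← hS, transpose_apply]
  rcases lt_trichotomy i j with hij | rfl | hij
  · simp only [Matrix.add_apply, transpose_apply, halfN, of_apply, if_pos hij,
      if_neg (not_lt_of_gt hij), if_neg (ne_of_gt hij)]
    simp only [add_zero]; exact key2 _
  · simp only [Matrix.add_apply, transpose_apply, halfN, of_apply, lt_irrefl, if_false, if_pos rfl]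
    exact key4 _
  · simp only [Matrix.add_apply, transpose_apply, halfN, of_apply, if_neg (not_lt_of_gt hij),
      if_pos hij, if_neg (ne_of_gt hij)]
    simp only [zero_add]; rw [hsym]; exact key2 _

theorem sigmaMat_transpose_mul {n m : ℕ} (h : 2 * m ≤ n) (S : Matrix (Fin m) (Fin m) A)
    (hS : Sᵀ = S) : (sigmaMat n m h S)ᵀ * sigmaMat n m h S = S := by
  unfold sigmaMat
  rw [transpose_submatrix, submatrix_mul_equiv]
  rw [transpose_fromRows, transpose_fromRows, fromCols_mul_fromRows,
    fromCols_mul_fromRows]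
  rw [submatrix_id_id]
  set N := halfN S with hN
  have h2 : ((algebraMap ℂ A Complex.I) • (1 - N))ᵀ * ((algebraMap ℂ A Complex.I) • (1 - N)) =
      -((1 - N)ᵀ * (1 - N)) := by
    rw [transpose_smul, smul_mul_assoc, mul_smul_comm, smul_smul,
      ← (algebraMap ℂ A).map_mul, Complex.I_mul_I, map_neg, RingHom.map_one, neg_smul, one_smul]
  rw [h2, transpose_zero, Matrix.zero_mul, add_zero, transpose_add, transpose_one,
    transpose_sub, transpose_one]
  have expand : (1 + Nᵀ) * (1 + N) + -((1 - Nᵀ) * (1 - N)) = N + Nᵀ + (N + Nᵀ) := by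
    noncomm_ring
  rw [expand]
  exact halfN_sym S hS

theorem sigmaMat_map {A' : Type*} [CommRing A'] [Algebra ℂ A'] {n m : ℕ} (h : 2 * m ≤ n)
    (S : Matrix (Fin m) (Fin m) A) (χ : A →ₐ[ℂ] A') (s : Fin n) (i : Fin m) :
    χ (sigmaMat n m h S s i) = sigmaMat n m h (S.map χ) s i := by
  have hhalf : ∀ a b : Fin m, χ (halfN S a b) = halfN (S.map χ) a b := by
    intro a b
    simp only [halfN, of_apply, map_apply, apply_ite χ, _root_.map_mul, AlgHom.commutes,
      map_zero]
  simp only [sigmaMat, submatrix_apply, id_eq]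
  rcases hs : (sigmaEquiv n m h).symm s with k | k | k
  · simp only [fromRows_apply_inl, Matrix.add_apply, one_apply, map_add, apply_ite χ, _root_.map_one,
      map_zero, hhalf]
  · simp only [fromRows_apply_inr, fromRows_apply_inl, Matrix.smul_apply, Matrix.sub_apply, one_apply,
      smul_eq_mul, _root_.map_mul, AlgHom.commutes, map_sub, apply_ite χ, _root_.map_one,
      map_zero, hhalf]
  · simp only [fromRows_apply_inr, Matrix.zero_apply, map_zero]

end SigmaSection

theorem aeval_rInv {A : Type*} [CommRing A] [Algebra ℂ A] {n m : ℕ}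
    (v : Fin n × Fin m → A) (i j : Fin m) :
    aeval v (rInv n m i j) =
      ((Matrix.of fun s k => v (s, k))ᵀ * (Matrix.of fun s k => v (s, k))) i j := by
  simp [rInv, mul_apply]

theorem exists_ortho_complement {n m : ℕ} (X : Matrix (Fin n) (Fin m) ℂ)
    (hdet : (Xᵀ * X).det ≠ 0) :
    ∃ X' : Matrix (Fin n) (Fin (n - m)) ℂ, Xᵀ * X' = 0 ∧ X'ᵀ * X' = 1 := by
  classical
  set S : Matrix (Fin m) (Fin m) ℂ := Xᵀ * X with hSdef
  have hSu : IsUnit S.det := isUnit_iff_ne_zero.2 hdet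
  -- key surjectivity
  have key : ∀ t : Fin m → ℂ, Xᵀ *ᵥ (X *ᵥ (S⁻¹ *ᵥ t)) = t := by
    intro t
    rw [mulVec_mulVec, mulVec_mulVec, ← hSdef, Matrix.mul_nonsing_inv _ hSu, one_mulVec]
  set U : Submodule ℂ (Fin n → ℂ) := LinearMap.ker (Xᵀ.mulVecLin) with hUdef
  have hsurj : Function.Surjective (Xᵀ.mulVecLin) := by
    intro t; exact ⟨X *ᵥ (S⁻¹ *ᵥ t), key t⟩
  have hrank : finrank ℂ U = n - m := by
    have h1 := LinearMap.finrank_range_add_finrank_ker (Xᵀ.mulVecLin)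
    rw [LinearMap.range_eq_top.2 hsurj, finrank_top, Module.finrank_fin_fun,
      Module.finrank_fin_fun] at h1
    rw [hUdef]
    omega
  -- the restricted dot-product bilinear form
  set BU : LinearMap.BilinForm ℂ U := LinearMap.mk₂ ℂ (fun u v : U => (u : Fin n → ℂ) ⬝ᵥ v)
    (fun u u' v => by simp [add_dotProduct])
    (fun a u v => by simp [smul_dotProduct])
    (fun u v v' => by simp [dotProduct_add])
    (fun a u v => by simp [dotProduct_smul]) with hBU
  have hBUapply : ∀ u v : U, BU u v = (u : Fin n → ℂ) ⬝ᵥ v := fun u v => rfl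
  have hsymm : BU.IsSymm := ⟨fun u v => by
    simp [hBUapply, dotProduct_comm]⟩
  have hker : ∀ u : U, Xᵀ *ᵥ (u : Fin n → ℂ) = 0 := by
    intro u; exact u.2
  have hnd : BU.Nondegenerate := by
    apply LinearMap.BilinForm.Nondegenerate.ofSeparatingLeft
    intro u hu
    have hu0 : ∀ v : Fin n → ℂ, (u : Fin n → ℂ) ⬝ᵥ v = 0 := by
      intro v
      have hw : v - X *ᵥ (S⁻¹ *ᵥ (Xᵀ *ᵥ v)) ∈ U := by
        simp only [hUdef, LinearMap.mem_ker, mulVecLin_apply, mulVec_sub, key, sub_self]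
      have h2 := hu ⟨_, hw⟩
      rw [hBUapply] at h2
      have h3 : (u : Fin n → ℂ) ⬝ᵥ (X *ᵥ (S⁻¹ *ᵥ (Xᵀ *ᵥ v))) = 0 := by
        rw [dotProduct_mulVec, ← Matrix.mulVec_transpose, hker u, zero_dotProduct]
      calc (u : Fin n → ℂ) ⬝ᵥ v
          = (u : Fin n → ℂ) ⬝ᵥ (X *ᵥ (S⁻¹ *ᵥ (Xᵀ *ᵥ v)) + (v - X *ᵥ (S⁻¹ *ᵥ (Xᵀ *ᵥ v)))) := by
            rw [add_sub_cancel]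
        _ = 0 := by rw [dotProduct_add, h2, h3, add_zero]
    have : (u : Fin n → ℂ) = 0 := by
      funext i
      have := hu0 (Pi.single i 1)
      rwa [dotProduct_single, mul_one] at this
    exact Subtype.ext this
  have hinv2 : Invertible (2 : ℂ) := invertibleOfNonzero two_ne_zero
  obtain ⟨b, hb⟩ := LinearMap.BilinForm.exists_orthogonal_basis (LinearMap.BilinForm.isSymm_iff.mp hsymm)
  rw [LinearMap.isOrthoᵢ_def] at hb
  have hdiag : ∀ i, BU (b i) (b i) ≠ 0 := by
    intro i h0
    apply b.ne_zero i
    apply hnd.1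
    intro y
    have hz : (BU (b i)) = 0 := by
      apply b.ext
      intro j
      rcases eq_or_ne i j with rfl | hij
      · simpa using h0
      · simpa using hb i j hij
    rw [hz]
    simp
  choose c hc using fun i => IsAlgClosed.exists_pow_nat_eq (BU (b i) (b i)) (zero_lt_two)
  have hc0 : ∀ i, c i ≠ 0 := by
    intro i h0
    exact hdiag i (by rw [← hc i, h0]; ring)
  set κ : Fin (n - m) → Fin (finrank ℂ U) := fun j => finCongr hrank.symm j with hκ
  have hκinj : Function.Injective κ := fun a b h =>
    (finCongr hrank.symm).injective h
  refine ⟨Matrix.of fun s j => (c (κ j))⁻¹ * ((b (κ j) : Fin n → ℂ) s), ?_, ?_⟩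
  · ext i j
    have h0 : Xᵀ *ᵥ ((b (κ j)) : Fin n → ℂ) = 0 := hker _
    have h1 := congrFun h0 i
    simp only [mulVec, dotProduct, Pi.zero_apply] at h1
    simp only [Matrix.mul_apply, of_apply, Matrix.zero_apply]
    calc ∑ s, Xᵀ i s * ((c (κ j))⁻¹ * (b (κ j) : Fin n → ℂ) s)
        = (c (κ j))⁻¹ * ∑ s, Xᵀ i s * (b (κ j) : Fin n → ℂ) s := by
          rw [Finset.mul_sum]; apply Finset.sum_congr rfl; intros; ring
      _ = 0 := by rw [h1, mul_zero]
  · ext i j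
    simp only [Matrix.mul_apply, transpose_apply, of_apply, one_apply]
    have hsum : ∑ s, ((c (κ i))⁻¹ * (b (κ i) : Fin n → ℂ) s) *
        ((c (κ j))⁻¹ * (b (κ j) : Fin n → ℂ) s) =
        (c (κ i))⁻¹ * (c (κ j))⁻¹ * (BU (b (κ i)) (b (κ j))) := by
      rw [hBUapply]
      unfold dotProduct
      rw [Finset.mul_sum]
      apply Finset.sum_congr rfl; intros; ring
    rw [hsum]
    rcases eq_or_ne i j with rfl | hij
    · rw [if_pos rfl, ← hc (κ i), pow_two]
      field_simp
      exact div_self (hc0 _)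
    · rw [if_neg hij, hb (κ i) (κ j) (fun hk => hij (hκinj hk)), mul_zero]

theorem exists_orthogonal_map {n m : ℕ} (X Y : Matrix (Fin n) (Fin m) ℂ)
    (hS : Xᵀ * X = Yᵀ * Y) (hdet : (Xᵀ * X).det ≠ 0) (hmn : m ≤ n) :
    ∃ g : Matrix (Fin n) (Fin n) ℂ, gᵀ * g = 1 ∧ g * X = Y := by
  obtain ⟨X', hX1, hX2⟩ := exists_ortho_complement X hdet
  obtain ⟨Y', hY1, hY2⟩ := exists_ortho_complement Y (by rwa [← hS])
  set K := fromCols X X' with hK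
  set K' := fromCols Y Y' with hK'
  have hgram : ∀ (Z : Matrix (Fin n) (Fin m) ℂ) (Z' : Matrix (Fin n) (Fin (n - m)) ℂ),
      Zᵀ * Z' = 0 → Z'ᵀ * Z' = 1 →
      (fromCols Z Z')ᵀ * fromCols Z Z' = fromBlocks (Zᵀ * Z) 0 0 1 := by
    intro Z Z' h1 h2
    rw [transpose_fromCols, fromRows_mul_fromCols, h1, h2]
    have : (Zᵀ * Z')ᵀ = 0 := by rw [h1, transpose_zero]
    rw [transpose_mul, transpose_transpose] at this
    rw [this]
  have hKK : Kᵀ * K = fromBlocks (Xᵀ * X) 0 0 1 := hgram X X' hX1 hX2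
  have hKK' : K'ᵀ * K' = fromBlocks (Xᵀ * X) 0 0 1 := by
    rw [hK', hgram Y Y' hY1 hY2, hS]
  have hdetKK : IsUnit (Kᵀ * K).det := by
    rw [hKK, det_fromBlocks_zero₂₁, det_one, mul_one]
    exact isUnit_iff_ne_zero.2 hdet
  set L := (Kᵀ * K)⁻¹ * Kᵀ with hL
  have hLK : L * K = 1 := by
    rw [hL, Matrix.mul_assoc, Matrix.nonsing_inv_mul _ hdetKK]
  have hKL : K * L = 1 := by
    have e : Fin n ≃ (Fin m ⊕ Fin (n - m)) :=
      (finCongr (by omega : n = m + (n - m))).trans finSumFinEquiv.symm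
    exact (Matrix.mul_eq_one_comm_of_equiv e).mpr hLK
  refine ⟨K' * L, ?_, ?_⟩
  · calc (K' * L)ᵀ * (K' * L)
        = Lᵀ * (K'ᵀ * K') * L := by
          rw [transpose_mul]; simp only [Matrix.mul_assoc]
      _ = Lᵀ * (Kᵀ * K) * L := by rw [hKK', hKK]
      _ = (K * L)ᵀ * (K * L) := by
          conv_rhs => rw [transpose_mul]
          simp only [Matrix.mul_assoc]
      _ = 1 := by rw [hKL, transpose_one, Matrix.one_mul]
  · have h1 : (K' * L) * K = K' := by rw [Matrix.mul_assoc, hLK, Matrix.mul_one]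
    rw [hK, mul_fromCols, hK'] at h1
    have h2 : ∀ i j, ((K' * L) * X) i j = Y i j := by
      intro i j
      have := congrFun (congrFun h1 i) (Sum.inl j)
      simpa [fromCols_apply_inl] using this
    ext i j
    exact h2 i j

/-- **First fundamental theorem of invariant theory for `O_n`** (in the range `n ≥ 2m`):
the algebra map from the polynomial ring on `m(m+1)/2` indeterminates sending the
generators to the quadratic invariants `r_{ij}`, `i ≤ j`, is injective with image
exactly the `O_n`-invariant polynomials on `M_{n,m}(ℂ)`. -/
theorem stmt_6 (n m : ℕ) (hnm : n ≥ 2 * m) :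
    Function.Injective
        (MvPolynomial.aeval (R := ℂ)
          (fun p : {p : Fin m × Fin m // p.1 ≤ p.2} => rInv n m p.1.1 p.1.2)) ∧
      ∀ f : MvPolynomial (Fin n × Fin m) ℂ,
        (f ∈ (MvPolynomial.aeval (R := ℂ)
            (fun p : {p : Fin m × Fin m // p.1 ≤ p.2} =>
              rInv n m p.1.1 p.1.2)).range ↔ IsOnInvariant n m f) := by
  classical
  have hnm' : 2 * m ≤ n := hnm
  have hmn : m ≤ n := by omega
  set rv : {p : Fin m × Fin m // p.1 ≤ p.2} → MvPolynomial (Fin n × Fin m) ℂ :=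
    fun p => rInv n m p.1.1 p.1.2 with hrv
  -- `aeval` into `ℂ` agrees with `eval`
  have haev1 : ∀ (σ : Type) (w : σ → ℂ) (f : MvPolynomial σ ℂ), (aeval w) f = eval w f := by
    intro σ w f
    rw [aeval_def, Algebra.algebraMap_self]
    rfl
  -- the generic symmetric matrix
  set Zsym : Matrix (Fin m) (Fin m) (MvPolynomial {p : Fin m × Fin m // p.1 ≤ p.2} ℂ) :=
    Matrix.of fun i j => if h : i ≤ j then X ⟨(i, j), h⟩ else X ⟨(j, i), le_of_not_ge h⟩
    with hZ
  have hZsym : Zsymᵀ = Zsym := by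
    ext i j
    rw [transpose_apply, hZ]
    by_cases h1 : i ≤ j <;> by_cases h2 : j ≤ i
    · have : i = j := le_antisymm h1 h2
      subst this
      rfl
    · simp only [of_apply, dif_neg h2, dif_pos h1]
    · simp only [of_apply, dif_pos h2, dif_neg h1]
    · exact absurd (le_of_not_ge h1) h2
  set σv : Fin n × Fin m → MvPolynomial {p : Fin m × Fin m // p.1 ≤ p.2} ℂ :=
    fun p => sigmaMat n m hnm' Zsym p.1 p.2 with hσv
  have hofσ : (Matrix.of fun s k => σv (s, k)) = sigmaMat n m hnm' Zsym := rfl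
  -- ψ ∘ φ = id
  have hψφ : (aeval σv).comp (aeval rv) =
      AlgHom.id ℂ (MvPolynomial {p : Fin m × Fin m // p.1 ≤ p.2} ℂ) := by
    apply MvPolynomial.algHom_ext
    rintro ⟨⟨i, j⟩, hij⟩
    rw [AlgHom.comp_apply, aeval_X, AlgHom.id_apply]
    show aeval σv (rInv n m i j) = _
    rw [aeval_rInv σv i j, hofσ, sigmaMat_transpose_mul hnm' Zsym hZsym, hZ]
    simp only [of_apply, dif_pos hij]
  have hinj : Function.Injective (aeval (R := ℂ) rv) := by
    intro a b hab
    have h2 := congrArg (aeval σv) hab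
    rw [← AlgHom.comp_apply, ← AlgHom.comp_apply, hψφ, AlgHom.id_apply, AlgHom.id_apply] at h2
    exact h2
  refine ⟨hinj, fun f => ⟨?_, ?_⟩⟩
  · -- range → invariant
    rintro ⟨P, rfl⟩ g hg Xm
    have hP : ((MvPolynomial.aeval (R := ℂ) rv).toRingHom P) =
        (MvPolynomial.aeval (R := ℂ) rv) P := rfl
    rw [hP]
    have hw : ∀ w : Fin n × Fin m → ℂ,
        eval w (aeval rv P) = aeval (fun p => aeval w (rv p)) P := by
      intro w
      rw [← haev1, ← AlgHom.comp_apply, comp_aeval]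
    rw [hw, hw]
    have hcongr : (fun p => aeval (fun q : Fin n × Fin m => (g * Xm) q.1 q.2) (rv p)) =
        (fun p => aeval (fun q : Fin n × Fin m => Xm q.1 q.2) (rv p)) := by
      funext p
      obtain ⟨⟨i, j⟩, hij⟩ := p
      show aeval _ (rInv n m i j) = aeval _ (rInv n m i j)
      rw [aeval_rInv, aeval_rInv]
      have e1 : (Matrix.of fun s k => (fun q : Fin n × Fin m => (g * Xm) q.1 q.2) (s, k)) =
          g * Xm := rfl
      have e2 : (Matrix.of fun s k => (fun q : Fin n × Fin m => Xm q.1 q.2) (s, k)) = Xm := rfl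
      rw [e1, e2]
      have : (g * Xm)ᵀ * (g * Xm) = Xmᵀ * Xm := by
        rw [transpose_mul, Matrix.mul_assoc, ← Matrix.mul_assoc gᵀ g Xm, hg, Matrix.one_mul]
      rw [this]
    rw [hcongr]
  · -- invariant → range
    intro hf
    refine ⟨aeval σv f, ?_⟩
    set F := aeval σv f with hF
    set hcand := aeval (R := ℂ) rv F with hhcand
    show hcand = f
    set q : MvPolynomial (Fin n × Fin m) ℂ :=
      (Matrix.of fun i j : Fin m => rInv n m i j).det with hq
    have hq0 : q ≠ 0 := by
      intro h0
      have h1 : eval (fun p : Fin n × Fin m =>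
          (sigmaMat n m hnm' (1 : Matrix (Fin m) (Fin m) ℂ)) p.1 p.2) q = 1 := by
        rw [hq, RingHom.map_det, RingHom.mapMatrix_apply]
        have hmap : (Matrix.of fun i j : Fin m => rInv n m i j).map
            (eval fun p : Fin n × Fin m =>
              (sigmaMat n m hnm' (1 : Matrix (Fin m) (Fin m) ℂ)) p.1 p.2) = 1 := by
          ext i j
          rw [map_apply, of_apply, ← haev1, aeval_rInv]
          have e3 : (Matrix.of fun s k => (fun p : Fin n × Fin m =>
              (sigmaMat n m hnm' (1 : Matrix (Fin m) (Fin m) ℂ)) p.1 p.2) (s, k)) =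
              sigmaMat n m hnm' (1 : Matrix (Fin m) (Fin m) ℂ) := rfl
          rw [e3, sigmaMat_transpose_mul hnm' 1 transpose_one]
        rw [hmap, det_one]
      rw [h0] at h1
      simp at h1
    have key : ∀ v : Fin n × Fin m → ℂ, eval v ((f - hcand) * q) = 0 := by
      intro v
      set Xm : Matrix (Fin n) (Fin m) ℂ := Matrix.of fun s i => v (s, i) with hXm
      have hvXm : (fun p : Fin n × Fin m => Xm p.1 p.2) = v := by
        funext p
        cases p
        rfl
      have hofXm : (Matrix.of fun s k => v (s, k)) = Xm := rfl
      have hqev : eval v q = (Xmᵀ * Xm).det := by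
        rw [hq, RingHom.map_det, RingHom.mapMatrix_apply]
        congr 1
        ext i j
        rw [map_apply, of_apply, ← haev1, aeval_rInv, hofXm]
      rw [_root_.map_mul, map_sub]
      by_cases hd : (Xmᵀ * Xm).det = 0
      · rw [hqev, hd, mul_zero]
      · set S := Xmᵀ * Xm with hSdef
        have hSsym : Sᵀ = S := by rw [hSdef, transpose_mul, transpose_transpose]
        set Y := sigmaMat n m hnm' S with hY
        have hYS : Yᵀ * Y = S := sigmaMat_transpose_mul hnm' S hSsym
        obtain ⟨g, hg, hgX⟩ := exists_orthogonal_map Xm Y hYS.symm hd hmn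
        have hfY : eval (fun p : Fin n × Fin m => Y p.1 p.2) f = eval v f := by
          have h5 := hf g hg Xm
          rw [hgX, hvXm] at h5
          exact h5
        have hhY : eval v hcand = eval (fun p : Fin n × Fin m => Y p.1 p.2) f := by
          rw [hhcand, ← haev1, ← AlgHom.comp_apply, comp_aeval]
          have hgen : (fun p : {p : Fin m × Fin m // p.1 ≤ p.2} => aeval v (rv p)) =
              fun p => S p.1.1 p.1.2 := by
            funext p
            show aeval v (rInv n m p.1.1 p.1.2) = _
            rw [aeval_rInv, hofXm]
          rw [hgen, hF, ← AlgHom.comp_apply, comp_aeval]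
          have hgen2 : (fun p : Fin n × Fin m =>
              aeval (fun p' : {p : Fin m × Fin m // p.1 ≤ p.2} => S p'.1.1 p'.1.2) (σv p)) =
              fun p => Y p.1 p.2 := by
            funext p
            show (aeval fun p' : {p : Fin m × Fin m // p.1 ≤ p.2} => S p'.1.1 p'.1.2)
              (sigmaMat n m hnm' Zsym p.1 p.2) = Y p.1 p.2
            rw [sigmaMat_map hnm' Zsym
              (aeval fun p' : {p : Fin m × Fin m // p.1 ≤ p.2} => S p'.1.1 p'.1.2) p.1 p.2]
            have hZmap : Zsym.map
                (aeval fun p' : {p : Fin m × Fin m // p.1 ≤ p.2} => S p'.1.1 p'.1.2) = S := by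
              ext i j
              rw [map_apply, hZ]
              by_cases hij : i ≤ j
              · simp only [of_apply, dif_pos hij, aeval_X]
              · simp only [of_apply, dif_neg hij, aeval_X]
                have : S j i = S i j := by conv_lhs => rw [← hSsym, transpose_apply]
                exact this
            rw [hZmap, hY]
          rw [hgen2, haev1]
        rw [hhY, hfY, sub_self, zero_mul]
    have hzero : (f - hcand) * q = 0 :=
      MvPolynomial.funext fun x => by rw [key x, map_zero]
    rcases mul_eq_zero.mp hzero with h1 | h1
    · exact (sub_eq_zero.mp h1).symm
    · exact absurd h1 hq0
end
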